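/- A partition γ is an r-core (i.e., no box of γ has hook length equal to r) if and only if its r-quotient is the r-tuple of empty partitions. -/
import Mathlib


/-- An *edge sequence*: a subset of `ℤ` (given as a predicate, `True` = a `1` and
`False` = a `0`) which is eventually `1` in one direction and eventually `0` in the other,
so that it has only finitely many inversions. -/
def IsEdgeSeq (b : ℤ → Prop) : Prop :=
  (∃ N : ℤ, ∀ i : ℤ, N ≤ i → b i) ∧ (∃ N : ℤ, ∀ i : ℤ, i ≤ N → ¬ b i)

/-- The number of `0`'s of the edge sequence lying above position `j`. -/
noncomputable def numZerosAbove (b : ℤ → Prop) (j : ℤ) : ℕ :=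
  Nat.card {i : ℤ // j < i ∧ ¬ b i}

/-- The shape of an edge sequence, as a weakly decreasing function `ℕ → ℕ` of parts:
the `(k+1)`-st part counts the `1`'s of `b` having at least `k+1` `0`'s beyond them. -/
noncomputable def esShape (b : ℤ → Prop) (k : ℕ) : ℕ :=
  Nat.card {j : ℤ // b j ∧ k + 1 ≤ numZerosAbove b j}

/-- The number of parts of `f` which are `≥ j`, i.e. the `j`-th column of the diagram
of `f` (the `j`-th part of the conjugate partition, `j ≥ 1`). -/
noncomputable def conjCount (f : ℕ → ℕ) (j : ℕ) : ℕ :=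
  Nat.card {i : ℕ // j ≤ f i}

/-- The partition (given by its parts `f 0 ≥ f 1 ≥ ⋯`, indexed from `0`) has a box
of hook length `n`: the box in (0-indexed) row `a` and (1-indexed) column `j`
has hook length `(f a - j) + (conjCount f j - (a+1)) + 1` (arm + leg + 1). -/
def HasHook (f : ℕ → ℕ) (n : ℕ) : Prop :=
  ∃ a j : ℕ, 1 ≤ j ∧ j ≤ f a ∧ (f a - j) + (conjCount f j - (a + 1)) + 1 = n

set_option linter.unusedSectionVars false
set_option linter.unusedVariables false

namespace Stmt0Aux

open Set

/-- The set of zeros above `j`. -/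
def Zs (b : ℤ → Prop) (j : ℤ) : Set ℤ := {i | j < i ∧ ¬ b i}

/-- The set of ones at positions `≤ p`. -/
def Os (b : ℤ → Prop) (p : ℤ) : Set ℤ := {i | i ≤ p ∧ b i}

noncomputable def onesUpTo (b : ℤ → Prop) (p : ℤ) : ℕ := (Os b p).ncard

lemma nZA_eq (b : ℤ → Prop) (j : ℤ) : numZerosAbove b j = (Zs b j).ncard := rfl

lemma esShape_eq (b : ℤ → Prop) (k : ℕ) :
    esShape b k = ({j | b j ∧ k + 1 ≤ numZerosAbove b j} : Set ℤ).ncard := rfl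

lemma conjCount_eq (f : ℕ → ℕ) (j : ℕ) :
    conjCount f j = ({i | j ≤ f i} : Set ℕ).ncard := rfl

variable {b : ℤ → Prop} {N1 N0 : ℤ}

section
variable (h1 : ∀ i : ℤ, N1 ≤ i → b i) (h0 : ∀ i : ℤ, i ≤ N0 → ¬ b i)
include h1 h0

lemma zero_lt {q : ℤ} (hq : ¬ b q) : q < N1 :=
  lt_of_not_ge fun h => hq (h1 _ h)

lemma one_gt {p : ℤ} (hp : b p) : N0 < p :=
  lt_of_not_ge fun h => h0 _ h hp

lemma finZ (j : ℤ) : (Zs b j).Finite :=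
  (Set.finite_Ioo j N1).subset fun i hi => ⟨hi.1, zero_lt h1 h0 hi.2⟩

lemma finO (p : ℤ) : (Os b p).Finite :=
  (Set.finite_Ioc N0 p).subset fun i hi => ⟨one_gt h1 h0 hi.2, hi.1⟩

lemma finOlt (q : ℤ) : ({i | i < q ∧ b i} : Set ℤ).Finite :=
  (Set.finite_Ioo N0 q).subset fun i hi => ⟨one_gt h1 h0 hi.2, hi.1⟩

lemma finShape (k : ℕ) : ({j | b j ∧ k + 1 ≤ numZerosAbove b j} : Set ℤ).Finite := by
  refine (Set.finite_Ioo N0 N1).subset fun j hj => ⟨one_gt h1 h0 hj.1, ?_⟩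
  have hne : (Zs b j).Nonempty := Set.nonempty_of_ncard_ne_zero (by
    have := hj.2; rw [nZA_eq] at this; omega)
  obtain ⟨z, hz1, hz2⟩ := hne
  exact lt_trans hz1 (zero_lt h1 h0 hz2)

lemma nZA_mono {i i' : ℤ} (h : i ≤ i') : numZerosAbove b i' ≤ numZerosAbove b i := by
  rw [nZA_eq, nZA_eq]
  exact Set.ncard_le_ncard (fun x hx => ⟨lt_of_le_of_lt h hx.1, hx.2⟩) (finZ h1 h0 i)

lemma nZA_step {i q : ℤ} (hq : ¬ b q) (hiq : i < q) :
    numZerosAbove b q + 1 ≤ numZerosAbove b i := by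
  have hins : insert q (Zs b q) ⊆ Zs b i := by
    rintro x (rfl | hx)
    · exact ⟨hiq, hq⟩
    · exact ⟨lt_trans hiq hx.1, hx.2⟩
  calc numZerosAbove b q + 1 = (insert q (Zs b q)).ncard := by
        rw [nZA_eq, Set.ncard_insert_of_notMem (by simp [Zs]) (finZ h1 h0 q)]
    _ ≤ (Zs b i).ncard := Set.ncard_le_ncard hins (finZ h1 h0 i)
    _ = numZerosAbove b i := (nZA_eq b i).symm

lemma nZA_lt_iff {i q : ℤ} (hi : b i) (hq : ¬ b q) :
    numZerosAbove b q + 1 ≤ numZerosAbove b i ↔ i < q := by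
  constructor
  · intro h
    by_contra hle
    push_neg at hle
    have hqi : q < i := lt_of_le_of_ne hle (by rintro rfl; exact hq hi)
    have := nZA_mono h1 h0 (le_of_lt hqi)
    omega
  · exact nZA_step h1 h0 hq

lemma shape_at_zero {q : ℤ} (hq : ¬ b q) :
    esShape b (numZerosAbove b q) = ({i | i < q ∧ b i} : Set ℤ).ncard := by
  rw [esShape_eq]
  congr 1
  ext i
  simp only [mem_setOf_eq]
  constructor
  · rintro ⟨hbi, hge⟩
    exact ⟨(nZA_lt_iff h1 h0 hbi hq).1 hge, hbi⟩
  · rintro ⟨hlt, hbi⟩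
    exact ⟨hbi, (nZA_lt_iff h1 h0 hbi hq).2 hlt⟩

lemma ones_insert {p : ℤ} (hp : b p) :
    onesUpTo b p = ({i | i < p ∧ b i} : Set ℤ).ncard + 1 := by
  have hset : Os b p = insert p {i | i < p ∧ b i} := by
    ext i
    simp only [Os, mem_setOf_eq, mem_insert_iff]
    constructor
    · rintro ⟨hle, hbi⟩
      rcases eq_or_lt_of_le hle with h | h
      · exact Or.inl h
      · exact Or.inr ⟨h, hbi⟩
    · rintro (rfl | ⟨h, hbi⟩)
      · exact ⟨le_refl _, hp⟩
      · exact ⟨le_of_lt h, hbi⟩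
  rw [onesUpTo, hset, Set.ncard_insert_of_notMem (by simp) (finOlt h1 h0 p)]

lemma conj_at_one {p : ℤ} (hp : b p) :
    conjCount (esShape b) (onesUpTo b p) = numZerosAbove b p := by
  have haux1 : ∀ a' : ℕ, a' + 1 ≤ numZerosAbove b p → onesUpTo b p ≤ esShape b a' := by
    intro a' ha'
    rw [esShape_eq, onesUpTo]
    refine Set.ncard_le_ncard (fun i hi => ⟨hi.2, le_trans ha' (nZA_mono h1 h0 hi.1)⟩)
      (finShape h1 h0 a')
  have haux2 : ∀ a' : ℕ, numZerosAbove b p ≤ a' → esShape b a' < onesUpTo b p := by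
    intro a' ha'
    have hsub : ({j | b j ∧ a' + 1 ≤ numZerosAbove b j} : Set ℤ) ⊆ {i | i < p ∧ b i} := by
      rintro i ⟨hbi, hge⟩
      refine ⟨?_, hbi⟩
      by_contra hle
      push_neg at hle
      have := nZA_mono h1 h0 hle
      omega
    have h2 : esShape b a' ≤ ({i | i < p ∧ b i} : Set ℤ).ncard := by
      rw [esShape_eq]; exact Set.ncard_le_ncard hsub (finOlt h1 h0 p)
    rw [ones_insert h1 h0 hp]
    omega
  rw [conjCount_eq]
  have hset : ({a' : ℕ | onesUpTo b p ≤ esShape b a'} : Set ℕ) = Set.Iio (numZerosAbove b p) := by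
    ext a'
    simp only [mem_setOf_eq, mem_Iio]
    constructor
    · intro h
      by_contra hle
      push_neg at hle
      exact absurd h (not_le_of_gt (haux2 a' hle))
    · intro h
      exact haux1 a' h
  rw [hset, ← Finset.coe_Iio, Set.ncard_coe_finset, Nat.card_Iio]

lemma ioo_count {p q : ℤ} (hpq : p < q) :
    ({i | p < i ∧ i < q ∧ b i} : Set ℤ).ncard
      + ({i | p < i ∧ i < q ∧ ¬ b i} : Set ℤ).ncard = (q - p - 1).toNat := by
  have hfin1 : ({i | p < i ∧ i < q ∧ b i} : Set ℤ).Finite :=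
    (Set.finite_Ioo p q).subset fun i hi => ⟨hi.1, hi.2.1⟩
  have hfin2 : ({i | p < i ∧ i < q ∧ ¬ b i} : Set ℤ).Finite :=
    (Set.finite_Ioo p q).subset fun i hi => ⟨hi.1, hi.2.1⟩
  have hdisj : Disjoint ({i | p < i ∧ i < q ∧ b i} : Set ℤ) {i | p < i ∧ i < q ∧ ¬ b i} := by
    rw [Set.disjoint_left]
    rintro i ⟨_, _, hbi⟩ ⟨_, _, hnbi⟩
    exact hnbi hbi
  have hun : ({i | p < i ∧ i < q ∧ b i} : Set ℤ) ∪ {i | p < i ∧ i < q ∧ ¬ b i} = Set.Ioo p q := by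
    ext i
    simp only [mem_union, mem_setOf_eq, mem_Ioo]
    by_cases hbi : b i <;> tauto
  rw [← Set.ncard_union_eq hdisj hfin1 hfin2, hun, ← Finset.coe_Ioo, Set.ncard_coe_finset,
    Int.card_Ioo]

lemma ones_split {p q : ℤ} (hpq : p < q) :
    ({i | i < q ∧ b i} : Set ℤ).ncard
      = onesUpTo b p + ({i | p < i ∧ i < q ∧ b i} : Set ℤ).ncard := by
  have hfin2 : ({i | p < i ∧ i < q ∧ b i} : Set ℤ).Finite :=
    (Set.finite_Ioo p q).subset fun i hi => ⟨hi.1, hi.2.1⟩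
  have hdisj : Disjoint (Os b p) ({i | p < i ∧ i < q ∧ b i} : Set ℤ) := by
    rw [Set.disjoint_left]
    rintro i ⟨hle, _⟩ ⟨hgt, _, _⟩
    omega
  have hun : Os b p ∪ {i | p < i ∧ i < q ∧ b i} = {i | i < q ∧ b i} := by
    ext i
    simp only [Os, mem_union, mem_setOf_eq]
    constructor
    · rintro (⟨hle, hbi⟩ | ⟨_, hlt, hbi⟩)
      · exact ⟨lt_of_le_of_lt hle hpq, hbi⟩
      · exact ⟨hlt, hbi⟩
    · rintro ⟨hlt, hbi⟩
      rcases le_or_gt i p with h | h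
      · exact Or.inl ⟨h, hbi⟩
      · exact Or.inr ⟨h, hlt, hbi⟩
  rw [← hun, Set.ncard_union_eq hdisj (finO h1 h0 p) hfin2, onesUpTo]

lemma zeros_split {p q : ℤ} (hq : ¬ b q) (hpq : p < q) :
    numZerosAbove b p
      = ({i | p < i ∧ i < q ∧ ¬ b i} : Set ℤ).ncard + (numZerosAbove b q + 1) := by
  have hfin1 : ({i | p < i ∧ i < q ∧ ¬ b i} : Set ℤ).Finite :=
    (Set.finite_Ioo p q).subset fun i hi => ⟨hi.1, hi.2.1⟩
  have hfinins : (insert q (Zs b q)).Finite := (finZ h1 h0 q).insert q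
  have hdisj : Disjoint ({i | p < i ∧ i < q ∧ ¬ b i} : Set ℤ) (insert q (Zs b q)) := by
    rw [Set.disjoint_left]
    rintro i ⟨_, hlt, _⟩ (rfl | ⟨hgt, _⟩) <;> omega
  have hun : ({i | p < i ∧ i < q ∧ ¬ b i} : Set ℤ) ∪ insert q (Zs b q) = Zs b p := by
    ext i
    simp only [Zs, mem_union, mem_setOf_eq, mem_insert_iff]
    constructor
    · rintro (⟨h, _, hbi⟩ | (rfl | ⟨h, hbi⟩))
      · exact ⟨h, hbi⟩
      · exact ⟨hpq, hq⟩
      · exact ⟨lt_trans hpq h, hbi⟩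
    · rintro ⟨hlt, hbi⟩
      rcases lt_trichotomy i q with h | rfl | h
      · exact Or.inl ⟨hlt, h, hbi⟩
      · exact Or.inr (Or.inl rfl)
      · exact Or.inr (Or.inr ⟨h, hbi⟩)
  rw [nZA_eq, ← hun, Set.ncard_union_eq hdisj hfin1 hfinins,
    Set.ncard_insert_of_notMem (by simp [Zs]) (finZ h1 h0 q), ← nZA_eq]

lemma hook_core {p q : ℤ} (hp : b p) (hq : ¬ b q) (hpq : p < q) :
    1 ≤ onesUpTo b p ∧ onesUpTo b p ≤ esShape b (numZerosAbove b q) ∧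
    (esShape b (numZerosAbove b q) - onesUpTo b p)
      + (conjCount (esShape b) (onesUpTo b p) - (numZerosAbove b q + 1)) + 1
      = (q - p).toNat := by
  have hAB := ioo_count h1 h0 (p:=p) (q:=q) hpq
  have hshape : esShape b (numZerosAbove b q)
      = onesUpTo b p + ({i | p < i ∧ i < q ∧ b i} : Set ℤ).ncard := by
    rw [shape_at_zero h1 h0 hq, ones_split h1 h0 hpq]
  have hconj : conjCount (esShape b) (onesUpTo b p)
      = ({i | p < i ∧ i < q ∧ ¬ b i} : Set ℤ).ncard + (numZerosAbove b q + 1) := by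
    rw [conj_at_one h1 h0 hp, zeros_split h1 h0 hq hpq]
  have hone : 1 ≤ onesUpTo b p := by
    rw [onesUpTo]
    have : (Os b p).Nonempty := ⟨p, le_refl _, hp⟩
    have := (Set.ncard_pos (finO h1 h0 p)).2 this
    omega
  exact ⟨hone, by omega, by omega⟩

lemma ex_zero (a : ℕ) : ∃ q : ℤ, ¬ b q ∧ numZerosAbove b q = a := by
  have hbdd : ∃ ub : ℤ, ∀ z : ℤ, (¬ b z ∧ a ≤ numZerosAbove b z) → z ≤ ub :=
    ⟨N1, fun z hz => le_of_lt (zero_lt h1 h0 hz.1)⟩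
  have hinh : ∃ z : ℤ, ¬ b z ∧ a ≤ numZerosAbove b z := by
    refine ⟨N0 - a, h0 _ (by omega), ?_⟩
    have hsub : Set.Ioc (N0 - a) N0 ⊆ Zs b (N0 - a) := fun i hi => ⟨hi.1, h0 i hi.2⟩
    have := Set.ncard_le_ncard hsub (finZ h1 h0 (N0 - a))
    rw [← Finset.coe_Ioc, Set.ncard_coe_finset, Int.card_Ioc] at this
    rw [nZA_eq]
    omega
  obtain ⟨q, ⟨hq, hge⟩, hmax⟩ := Int.exists_greatest_of_bdd hbdd hinh
  refine ⟨q, hq, le_antisymm ?_ hge⟩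
  by_contra hcon
  push_neg at hcon
  have hne : (Zs b q).Nonempty := Set.nonempty_of_ncard_ne_zero (by rw [← nZA_eq]; omega)
  obtain ⟨q', hq'mem, hmin⟩ :=
    Int.exists_least_of_bdd (P := fun z => z ∈ Zs b q) ⟨q, fun z hz => le_of_lt hz.1⟩ hne
  obtain ⟨hqq', hbq'⟩ := hq'mem
  have hsplit : Zs b q = insert q' (Zs b q') := by
    ext i
    simp only [Zs, mem_setOf_eq, mem_insert_iff]
    constructor
    · rintro ⟨hqi, hbi⟩
      rcases eq_or_lt_of_le (hmin i ⟨hqi, hbi⟩) with h | h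
      · exact Or.inl h.symm
      · exact Or.inr ⟨h, hbi⟩
    · rintro (rfl | ⟨h, hbi⟩)
      · exact ⟨hqq', hbq'⟩
      · exact ⟨lt_trans hqq' h, hbi⟩
  have heq : numZerosAbove b q = numZerosAbove b q' + 1 := by
    rw [nZA_eq, hsplit, Set.ncard_insert_of_notMem (by simp [Zs]) (finZ h1 h0 q'), ← nZA_eq]
  have hle : q' ≤ q := hmax q' ⟨hbq', by omega⟩
  omega

lemma ex_one (j : ℕ) (hj : 1 ≤ j) : ∃ p : ℤ, b p ∧ onesUpTo b p = j := by
  have hbdd : ∃ lb : ℤ, ∀ z : ℤ, (b z ∧ j ≤ onesUpTo b z) → lb ≤ z :=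
    ⟨N0, fun z hz => le_of_lt (one_gt h1 h0 hz.1)⟩
  have hinh : ∃ z : ℤ, b z ∧ j ≤ onesUpTo b z := by
    refine ⟨N1 + j - 1, h1 _ (by omega), ?_⟩
    have hsub : Set.Icc N1 (N1 + j - 1) ⊆ Os b (N1 + j - 1) :=
      fun i hi => ⟨hi.2, h1 i hi.1⟩
    have := Set.ncard_le_ncard hsub (finO h1 h0 (N1 + j - 1))
    rw [← Finset.coe_Icc, Set.ncard_coe_finset, Int.card_Icc] at this
    rw [onesUpTo]
    omega
  obtain ⟨p, ⟨hp, hge⟩, hmin⟩ := Int.exists_least_of_bdd hbdd hinh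
  refine ⟨p, hp, le_antisymm ?_ hge⟩
  by_contra hcon
  push_neg at hcon
  have hins := ones_insert h1 h0 hp
  have hne : ({i | i < p ∧ b i} : Set ℤ).Nonempty :=
    Set.nonempty_of_ncard_ne_zero (by omega)
  obtain ⟨p', hp'mem, hmax⟩ :=
    Int.exists_greatest_of_bdd (P := fun z => z ∈ ({i | i < p ∧ b i} : Set ℤ))
      ⟨p, fun z hz => le_of_lt hz.1⟩ hne
  obtain ⟨hp'p, hbp'⟩ := hp'mem
  have hsplit : Os b p = insert p (Os b p') := by
    ext i
    simp only [Os, mem_setOf_eq, mem_insert_iff]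
    constructor
    · rintro ⟨hle, hbi⟩
      rcases eq_or_lt_of_le hle with h | h
      · exact Or.inl h
      · exact Or.inr ⟨hmax i ⟨h, hbi⟩, hbi⟩
    · rintro (rfl | ⟨h, hbi⟩)
      · exact ⟨le_refl _, hp⟩
      · exact ⟨le_trans h (le_of_lt hp'p), hbi⟩
  have heq : onesUpTo b p = onesUpTo b p' + 1 := by
    rw [onesUpTo, hsplit,
      Set.ncard_insert_of_notMem (fun h => absurd h.1 (not_le_of_gt hp'p)) (finO h1 h0 p'),
      ← onesUpTo]
  have hle : p ≤ p' := hmin p' ⟨hbp', by omega⟩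
  omega

lemma hasHook_iff (n : ℕ) (hn : 1 ≤ n) :
    HasHook (esShape b) n ↔ ∃ p : ℤ, b p ∧ ¬ b (p + n) := by
  constructor
  · rintro ⟨a, j, hj1, hjf, hhook⟩
    obtain ⟨q, hq, hqa⟩ := ex_zero h1 h0 a
    obtain ⟨p, hp, hpj⟩ := ex_one h1 h0 j hj1
    have hpq : p < q := by
      by_contra hle
      push_neg at hle
      have hsub : ({i | i < q ∧ b i} : Set ℤ) ⊆ {i | i < p ∧ b i} :=
        fun i hi => ⟨lt_of_lt_of_le hi.1 hle, hi.2⟩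
      have h2 : esShape b a ≤ ({i | i < p ∧ b i} : Set ℤ).ncard := by
        rw [← hqa, shape_at_zero h1 h0 hq]
        exact Set.ncard_le_ncard hsub (finOlt h1 h0 p)
      have h3 := ones_insert h1 h0 hp
      omega
    obtain ⟨_, _, hcore⟩ := hook_core h1 h0 hp hq hpq
    rw [hqa, hpj, hhook] at hcore
    refine ⟨p, hp, ?_⟩
    have : p + (n : ℤ) = q := by omega
    rwa [this]
  · rintro ⟨p, hp, hq⟩
    have hpq : p < p + n := by omega
    obtain ⟨h1', h2', h3'⟩ := hook_core h1 h0 hp hq hpq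
    refine ⟨numZerosAbove b (p + n), onesUpTo b p, h1', h2', ?_⟩
    rw [h3']
    omega

lemma shape_zero_iff :
    (∀ k : ℕ, esShape b k = 0) ↔ ∀ x y : ℤ, x < y → b x → b y := by
  constructor
  · intro h x y hxy hbx
    by_contra hby
    have h0' := h 0
    rw [esShape_eq, Set.ncard_eq_zero (finShape h1 h0 0)] at h0'
    have hx : x ∈ ({j | b j ∧ 0 + 1 ≤ numZerosAbove b j} : Set ℤ) := by
      refine ⟨hbx, ?_⟩
      have hne : (Zs b x).Nonempty := ⟨y, hxy, hby⟩
      have := (Set.ncard_pos (finZ h1 h0 x)).2 hne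
      rw [nZA_eq]
      omega
    rw [h0'] at hx
    exact hx
  · intro hmono k
    rw [esShape_eq, Set.ncard_eq_zero (finShape h1 h0 k)]
    apply Set.eq_empty_iff_forall_notMem.2
    rintro j ⟨hbj, hge⟩
    have hz : Zs b j = ∅ := by
      apply Set.eq_empty_iff_forall_notMem.2
      rintro i ⟨hlt, hbi⟩
      exact hbi (hmono j i hlt hbj)
    rw [nZA_eq, hz, Set.ncard_empty] at hge
    omega

end

end Stmt0Aux

open Stmt0Aux

/-- A partition `γ` (encoded as the shape of an edge sequence `b`)
is an `r`-core, i.e. has no box of hook length `r`, if and only if its `r`-quotient is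
the `r`-tuple of empty partitions, where the `i`-th component of the `r`-quotient is the
shape of the `i`-th runner `j ↦ b (r*j + i)` of `b`. -/
theorem stmt0 (r : ℕ) (hr : 1 ≤ r) (b : ℤ → Prop) (hb : IsEdgeSeq b) :
    ¬ HasHook (esShape b) r ↔
      ∀ i : ℕ, i < r → ∀ k : ℕ, esShape (fun j : ℤ => b (r * j + (i : ℤ))) k = 0 := by
  obtain ⟨⟨N1, h1⟩, ⟨N0, h0⟩⟩ := hb
  have hr' : (1 : ℤ) ≤ r := by exact_mod_cast hr
  have key : ¬ HasHook (esShape b) r ↔ ∀ p : ℤ, b p → b (p + r) := by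
    rw [hasHook_iff h1 h0 r hr]
    simp only [not_exists, not_and, not_not]
  -- runner bounds
  have hrun1 : ∀ i : ℕ, ∀ j : ℤ, max N1 0 ≤ j → b ((r : ℤ) * j + (i : ℤ)) := by
    intro i j hj
    apply h1
    have hj0 : (0 : ℤ) ≤ j := le_trans (le_max_right _ _) hj
    have hjN : N1 ≤ j := le_trans (le_max_left _ _) hj
    nlinarith [Int.ofNat_nonneg i]
  have hrun0 : ∀ i : ℕ, ∀ j : ℤ, j ≤ min 0 (N0 - i) → ¬ b ((r : ℤ) * j + (i : ℤ)) := by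
    intro i j hj
    apply h0
    have hj0 : j ≤ (0 : ℤ) := le_trans hj (min_le_left _ _)
    have hjN : j ≤ N0 - i := le_trans hj (min_le_right _ _)
    nlinarith
  rw [key]
  constructor
  · intro hstep i hi
    refine (shape_zero_iff (hrun1 i) (hrun0 i)).2 ?_
    intro x y hxy hcx
    have key2 : ∀ d : ℕ, b ((r : ℤ) * (x + d) + (i : ℤ)) := by
      intro d
      induction d with
      | zero => simpa using hcx
      | succ d ih =>
        have step := hstep _ ih
        have harg : (r : ℤ) * (x + (d + 1 : ℕ)) + (i : ℤ)
            = ((r : ℤ) * (x + d) + (i : ℤ)) + r := by push_cast; ring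
        rwa [harg]
    have hy := key2 (y - x).toNat
    have harg : x + ((y - x).toNat : ℤ) = y := by omega
    rwa [harg] at hy
  · intro hq p hp
    have hrpos : (0 : ℤ) < r := by omega
    have hi0 : 0 ≤ p % r := Int.emod_nonneg p (ne_of_gt hrpos)
    have hilt : p % r < r := Int.emod_lt_of_pos p hrpos
    set i : ℕ := (p % r).toNat with hidef
    have hicast : (i : ℤ) = p % r := Int.toNat_of_nonneg hi0
    have hir : i < r := by omega
    have hmono := (shape_zero_iff (hrun1 i) (hrun0 i)).1 (hq i hir)
    have hdm : (r : ℤ) * (p / r) + (i : ℤ) = p := by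
      rw [hicast]; exact Int.mul_ediv_add_emod p r
    have h1' := hmono (p / r) (p / r + 1) (by omega) (by rw [hdm]; exact hp)
    have harg : (r : ℤ) * (p / r + 1) + (i : ℤ) = p + r := by
      rw [mul_add, mul_one]; omega
    rwa [harg] at h1'
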